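/- Let p ∈ ℤ be a prime number. If p ∣ d, then there exists exactly one ideal 𝔞 of 𝒪_D of norm p, and it satisfies 𝔞^σ = 𝔞 (where 𝔞^σ denotes the image of 𝔞 under the conjugation σ). If p ∤ d, then there exist exactly two distinct ideals 𝔞 ≠ 𝔟 of 𝒪_D of norm p, and they satisfy 𝔞^σ = 𝔟. -/
import Mathlib


/-- The quadratic order `𝒪_D` of square discriminant `D = d²`,
realized as the subring `{(x,y) ∈ ℤ × ℤ : x ≡ y (mod d)}` of `ℤ × ℤ`. -/
def Od (d : ℤ) : Subring (ℤ × ℤ) where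
  carrier := {z | d ∣ z.1 - z.2}
  one_mem' := by simp
  zero_mem' := by simp
  mul_mem' := by
    rintro a b ha hb
    show d ∣ a.1 * b.1 - a.2 * b.2
    have h : a.1 * b.1 - a.2 * b.2 = (a.1 - a.2) * b.1 + a.2 * (b.1 - b.2) := by ring
    rw [h]
    exact dvd_add (ha.mul_right b.1) (hb.mul_left a.2)
  add_mem' := by
    rintro a b ha hb
    show d ∣ a.1 + b.1 - (a.2 + b.2)
    have h : a.1 + b.1 - (a.2 + b.2) = (a.1 - a.2) + (b.1 - b.2) := by ring
    rw [h]
    exact dvd_add ha hb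
  neg_mem' := by
    rintro a ha
    show d ∣ -a.1 - -a.2
    have h : -a.1 - -a.2 = -(a.1 - a.2) := by ring
    rw [h]
    exact ha.neg_right

lemma mem_Od {d : ℤ} {z : ℤ × ℤ} : z ∈ Od d ↔ d ∣ z.1 - z.2 := Iff.rfl

/-- The element `w = (0, d)` of the standard basis of `𝒪_D`. -/
def wd (d : ℤ) : Od d := ⟨(0, d), mem_Od.mpr ⟨-1, by ring⟩⟩


/-- The Galois conjugation `σ(x,y) = (y,x)` of `𝒪_D`, as a ring homomorphism. -/
def sw (d : ℤ) : Od d →+* Od d where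
  toFun z := ⟨((z : ℤ × ℤ).2, (z : ℤ × ℤ).1), mem_Od.mpr (dvd_sub_comm.mp z.2)⟩
  map_one' := Subtype.ext rfl
  map_mul' := fun _ _ => Subtype.ext rfl
  map_zero' := Subtype.ext rfl
  map_add' := fun _ _ => Subtype.ext rfl

/-- First coordinate mod `p`, as a ring hom. -/
def f1 (d : ℤ) (p : ℕ) : Od d →+* ZMod p :=
  (Int.castRingHom (ZMod p)).comp ((RingHom.fst ℤ ℤ).comp (Od d).subtype)

/-- Second coordinate mod `p`, as a ring hom. -/
def f2 (d : ℤ) (p : ℕ) : Od d →+* ZMod p :=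
  (Int.castRingHom (ZMod p)).comp ((RingHom.snd ℤ ℤ).comp (Od d).subtype)

lemma f1_apply (d : ℤ) (p : ℕ) (z : Od d) : f1 d p z = ((z : ℤ × ℤ).1 : ZMod p) := rfl
lemma f2_apply (d : ℤ) (p : ℕ) (z : Od d) : f2 d p z = ((z : ℤ × ℤ).2 : ZMod p) := rfl

lemma f1_surjective (d : ℤ) (p : ℕ) : Function.Surjective (f1 d p) := fun c => by
  obtain ⟨n, hn⟩ := ZMod.intCast_surjective (n := p) c
  exact ⟨⟨(n, n), mem_Od.mpr (by simp)⟩, hn⟩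

lemma f2_surjective (d : ℤ) (p : ℕ) : Function.Surjective (f2 d p) := fun c => by
  obtain ⟨n, hn⟩ := ZMod.intCast_surjective (n := p) c
  exact ⟨⟨(n, n), mem_Od.mpr (by simp)⟩, hn⟩

/-- Decomposition of an element of `Od d` as `x + k • w`. -/
lemma od_decomp (d : ℤ) (z : Od d) :
    z = ((z : ℤ × ℤ).1 : Od d) + (((z : ℤ × ℤ).2 - (z : ℤ × ℤ).1) / d) • wd d := by
  have hdvd : d ∣ (z : ℤ × ℤ).2 - (z : ℤ × ℤ).1 := dvd_sub_comm.mp z.2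
  have hk : d * (((z : ℤ × ℤ).2 - (z : ℤ × ℤ).1) / d) = (z : ℤ × ℤ).2 - (z : ℤ × ℤ).1 :=
    Int.mul_ediv_cancel' hdvd
  apply Subtype.ext
  apply Prod.ext
  · show (z : ℤ × ℤ).1 = (z : ℤ × ℤ).1 + _ * (0 : ℤ)
    ring
  · show (z : ℤ × ℤ).2 = (z : ℤ × ℤ).1 + _ * d
    rw [mul_comm, hk]; ring

/-- Any ring hom `Od d →+* ZMod p` with `p` prime is `f1` or `f2`. -/
lemma hom_eq (d : ℤ) (p : ℕ) (hp : p.Prime) (g : Od d →+* ZMod p) :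
    g = f1 d p ∨ g = f2 d p := by
  haveI := Fact.mk hp
  have hw : wd d * wd d = (d : Od d) * wd d := by
    apply Subtype.ext
    apply Prod.ext
    · show (0 : ℤ) * 0 = d * 0; ring
    · show (d : ℤ) * d = d * d; rfl
  have ht : g (wd d) * g (wd d) = (d : ZMod p) * g (wd d) := by
    rw [← map_mul, hw, map_mul, map_intCast]
  have htt : g (wd d) = 0 ∨ g (wd d) = (d : ZMod p) := by
    rcases mul_eq_zero.mp (show (g (wd d) - (d : ZMod p)) * g (wd d) = 0 by
      rw [sub_mul, ht]; ring) with h | h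
    · right; exact sub_eq_zero.mp h
    · left; exact h
  have key : ∀ z : Od d, g z =
      ((z : ℤ × ℤ).1 : ZMod p) + (((z : ℤ × ℤ).2 - (z : ℤ × ℤ).1) / d) • g (wd d) := by
    intro z
    conv_lhs => rw [od_decomp d z]
    rw [map_add, map_zsmul, map_intCast]
  rcases htt with h | h
  · left
    ext z
    rw [key, h, smul_zero, add_zero, f1_apply]
  · right
    ext z
    have hdvd : d ∣ (z : ℤ × ℤ).2 - (z : ℤ × ℤ).1 := dvd_sub_comm.mp z.2
    have hk : (((z : ℤ × ℤ).2 - (z : ℤ × ℤ).1) / d) * d = (z : ℤ × ℤ).2 - (z : ℤ × ℤ).1 := by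
      rw [mul_comm]; exact Int.mul_ediv_cancel' hdvd
    rw [key, h, f2_apply, zsmul_eq_mul, ← Int.cast_mul, ← Int.cast_add, hk]
    ring_nf

lemma ker_f1_card (d : ℤ) (p : ℕ) :
    Nat.card (Od d ⧸ RingHom.ker (f1 d p)) = p := by
  rw [Nat.card_congr (RingHom.quotientKerEquivOfSurjective (f1_surjective d p)).toEquiv,
    Nat.card_zmod]

lemma ker_f2_card (d : ℤ) (p : ℕ) :
    Nat.card (Od d ⧸ RingHom.ker (f2 d p)) = p := by
  rw [Nat.card_congr (RingHom.quotientKerEquivOfSurjective (f2_surjective d p)).toEquiv,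
    Nat.card_zmod]

lemma f2_comp_sw (d : ℤ) (p : ℕ) : (f2 d p).comp (sw d) = f1 d p := rfl
lemma f1_comp_sw (d : ℤ) (p : ℕ) : (f1 d p).comp (sw d) = f2 d p := rfl

lemma map_sw_ker (d : ℤ) (p : ℕ) :
    Ideal.map (sw d) (RingHom.ker (f1 d p)) = RingHom.ker (f2 d p) := by
  apply le_antisymm
  · rw [Ideal.map_le_iff_le_comap]
    intro x hx
    show x ∈ Ideal.comap (sw d) (RingHom.ker (f2 d p))
    rw [RingHom.comap_ker, f2_comp_sw]
    exact hx
  · intro x hx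
    have h1 : sw d x ∈ RingHom.ker (f1 d p) := by
      rw [RingHom.mem_ker] at hx ⊢
      have : (f1 d p) (sw d x) = (f2 d p) x := rfl
      rw [this, hx]
    have h2 : x = sw d (sw d x) := Subtype.ext rfl
    rw [h2]
    exact Ideal.mem_map_of_mem _ h1

set_option synthInstance.maxHeartbeats 1000000 in
set_option maxHeartbeats 1000000 in
/-- Classification of ideals of norm `p`. -/
lemma ideal_classify (d : ℤ) (p : ℕ) (hp : p.Prime) (C : Ideal (Od d))
    (hC : Nat.card (Od d ⧸ C) = p) :
    C = RingHom.ker (f1 d p) ∨ C = RingHom.ker (f2 d p) := by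
  haveI := Fact.mk hp
  haveI hfin : Finite (Od d ⧸ C) := Nat.finite_of_card_ne_zero (by rw [hC]; exact hp.ne_zero)
  haveI hnt : Nontrivial (Od d ⧸ C) := by
    rw [← Finite.one_lt_card_iff_nontrivial, hC]; exact hp.one_lt
  have hpz : (p : Od d ⧸ C) = 0 := by
    have h1 : p • (1 : Od d ⧸ C) = 0 := by rw [← hC]; exact card_nsmul_eq_zero'
    rwa [nsmul_eq_mul, mul_one] at h1
  have hring : ringChar (Od d ⧸ C) = p := by
    rcases (Nat.Prime.eq_one_or_self_of_dvd hp _ (ringChar.dvd hpz)) with h | h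
    · exact absurd h (CharP.ringChar_ne_one)
    · exact h
  haveI : CharP (Od d ⧸ C) p := ringChar.of_eq hring
  have hbij : Function.Bijective (ZMod.castHom dvd_rfl (Od d ⧸ C)) :=
    (Nat.bijective_iff_injective_and_card _).mpr
      ⟨(ZMod.castHom dvd_rfl (Od d ⧸ C)).injective, by rw [Nat.card_zmod, hC]⟩
  let e := (RingEquiv.ofBijective _ hbij).symm
  let g := e.toRingHom.comp (Ideal.Quotient.mk C)
  have hker : RingHom.ker g = C := by
    ext x
    rw [RingHom.mem_ker]
    show e (Ideal.Quotient.mk C x) = 0 ↔ x ∈ C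
    rw [← map_zero e, (EmbeddingLike.apply_eq_iff_eq e), Ideal.Quotient.eq_zero_iff_mem]
  rcases hom_eq d p hp g with h | h
  · left; rw [← hker, h]
  · right; rw [← hker, h]

lemma ker_eq_of_dvd (d : ℤ) (p : ℕ) (hpd : (p : ℤ) ∣ d) :
    RingHom.ker (f1 d p) = RingHom.ker (f2 d p) := by
  have : f1 d p = f2 d p := by
    ext z
    rw [f1_apply, f2_apply, ← sub_eq_zero, ← Int.cast_sub]
    exact (ZMod.intCast_zmod_eq_zero_iff_dvd _ p).mpr (hpd.trans z.2)
  rw [this]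

/-- Theorem A.9: for a prime `p`, if `p ∣ d` there is exactly one ideal `𝔞`
of `𝒪_D` of norm `p` and it satisfies `𝔞^σ = 𝔞`; if `p ∤ d` there are exactly two distinct
ideals of norm `p`, interchanged by `σ`. -/
theorem count_ideals_of_prime_norm (d : ℤ) (hd : 1 ≤ d) (p : ℕ) (hp : p.Prime) :
    ((p : ℤ) ∣ d →
      ∃ A : Ideal (Od d), Nat.card (Od d ⧸ A) = p ∧ Ideal.map (sw d) A = A ∧
        ∀ B : Ideal (Od d), Nat.card (Od d ⧸ B) = p → B = A) ∧
    (¬ (p : ℤ) ∣ d →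
      ∃ A B : Ideal (Od d), A ≠ B ∧
        Nat.card (Od d ⧸ A) = p ∧ Nat.card (Od d ⧸ B) = p ∧
        Ideal.map (sw d) A = B ∧
        ∀ C : Ideal (Od d), Nat.card (Od d ⧸ C) = p → C = A ∨ C = B) := by
  constructor
  · intro hpd
    refine ⟨RingHom.ker (f1 d p), ker_f1_card d p, ?_, ?_⟩
    · rw [map_sw_ker, ker_eq_of_dvd d p hpd]
    · intro B hB
      rcases ideal_classify d p hp B hB with h | h
      · exact h
      · rw [h, ker_eq_of_dvd d p hpd]
  · intro hpd
    refine ⟨RingHom.ker (f1 d p), RingHom.ker (f2 d p), ?_,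
      ker_f1_card d p, ker_f2_card d p, map_sw_ker d p, ideal_classify d p hp⟩
    intro heq
    have h1 : wd d ∈ RingHom.ker (f1 d p) := by
      rw [RingHom.mem_ker, f1_apply]
      show ((0 : ℤ) : ZMod p) = 0
      simp
    rw [heq, RingHom.mem_ker, f2_apply] at h1
    exact hpd ((ZMod.intCast_zmod_eq_zero_iff_dvd d p).mp h1)
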